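/- Let R be a valuation ring with fraction field K, and let B be a local integrally closed domain containing R such that the inclusion R ⊆ B is a local homomorphism (the maximal ideal of B contracts to the maximal ideal of R) and the fraction field L of B is algebraic over K. Then B is a valuation ring. -/

import Mathlib

open Polynomial Finset in
/-- Elements of `B[x] ∩ B[x⁻¹]` are integral over `B`. -/
private lemma aux_int_stmt14 {B L : Type*} [CommRing B] [Field L] [Algebra B L]
    (x y : L) (hx : x ≠ 0)
    (hy1 : y ∈ Algebra.adjoin B {x}) (hy2 : y ∈ Algebra.adjoin B {x⁻¹}) :
    IsIntegral B y := by
  rw [Algebra.adjoin_singleton_eq_range_aeval] at hy1 hy2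
  obtain ⟨f, hf⟩ := hy1
  obtain ⟨g, hg⟩ := hy2
  simp only [AlgHom.toRingHom_eq_coe, RingHom.coe_coe] at hf hg
  set m := f.natDegree with hm
  set k := g.natDegree with hk
  set N : Submodule B L := Submodule.span B ((fun n : ℕ => x ^ n) '' Set.Iic (m + k)) with hN
  have h1N : (1 : L) ∈ N := Submodule.subset_span ⟨0, by simp⟩
  have hNbot : N ≠ ⊥ := by
    intro h
    rw [h, Submodule.mem_bot] at h1N
    exact one_ne_zero h1N
  have hNfg : N.FG := Submodule.fg_span ((Set.finite_Iic _).image _)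
  refine isIntegral_of_smul_mem_submodule N hNbot hNfg y ?_
  intro n hn
  induction hn using Submodule.span_induction with
  | mem v hv =>
    obtain ⟨i, hi, rfl⟩ := hv
    simp only [Set.mem_Iic] at hi
    by_cases hik : k ≤ i
    · have : y • x ^ i = ∑ t ∈ range (k + 1), g.coeff t • x ^ (i - t) := by
        rw [smul_eq_mul, ← hg, aeval_eq_sum_range, sum_mul]
        refine Finset.sum_congr rfl fun t ht => ?_
        rw [mem_range, Nat.lt_succ_iff] at ht
        rw [smul_mul_assoc]
        congr 1
        have htle : t ≤ i := ht.trans hik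
        rw [mul_comm, pow_sub₀ x hx htle, inv_pow]
      rw [this]
      refine Submodule.sum_mem _ fun t ht => Submodule.smul_mem _ _ ?_
      exact Submodule.subset_span ⟨i - t, by simp only [Set.mem_Iic]; omega, rfl⟩
    · push_neg at hik
      have : y • x ^ i = ∑ s ∈ range (m + 1), f.coeff s • x ^ (s + i) := by
        rw [smul_eq_mul, ← hf, aeval_eq_sum_range, sum_mul]
        refine Finset.sum_congr rfl fun s hs => ?_
        rw [smul_mul_assoc, ← pow_add]
      rw [this]
      refine Submodule.sum_mem _ fun s hs => Submodule.smul_mem _ _ ?_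
      rw [mem_range, Nat.lt_succ_iff] at hs
      exact Submodule.subset_span ⟨s + i, by simp only [Set.mem_Iic]; omega, rfl⟩
  | zero => simpa using N.zero_mem
  | add a b _ _ ha hb => rw [smul_add]; exact N.add_mem ha hb
  | smul c a _ ha => rw [smul_comm]; exact N.smul_mem c ha

private lemma aux_div_stmt14 {B L : Type*} [CommRing B] [Field L] [Algebra B L]
    {b wb : B} {s : L} (hb : IsUnit b) (h : algebraMap B L wb = algebraMap B L b * s) :
    ∃ c : B, algebraMap B L c = s := by
  obtain ⟨u, rfl⟩ := hb
  refine ⟨↑u⁻¹ * wb, ?_⟩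
  have h1 : algebraMap B L ↑u⁻¹ * algebraMap B L ↑u = 1 := by
    rw [← map_mul, Units.inv_mul, map_one]
  rw [map_mul, h, ← mul_assoc, h1, one_mul]

private lemma aux_min_dvd_stmt14 {R : Type*} [CommMonoid R]
    (htot : ∀ a b : R, a ∣ b ∨ b ∣ a) (s : Finset R) (hs : s.Nonempty) :
    ∃ j ∈ s, ∀ i ∈ s, j ∣ i := by
  induction hs using Finset.Nonempty.cons_induction with
  | singleton a => exact ⟨a, by simp⟩
  | cons a s ha hs ih =>
    obtain ⟨j, hj, hjd⟩ := ih
    rcases htot a j with h | h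
    · refine ⟨a, Finset.mem_cons_self _ _, fun i hi => ?_⟩
      rcases Finset.mem_cons.mp hi with rfl | hi
      · exact dvd_rfl
      · exact h.trans (hjd i hi)
    · refine ⟨j, Finset.mem_cons_of_mem hj, fun i hi => ?_⟩
      rcases Finset.mem_cons.mp hi with rfl | hi
      · exact h
      · exact hjd i hi

/-- A local integrally closed domain `B` dominating a valuation ring `R` inside an
algebraic extension of its fraction field is itself a valuation ring. -/
theorem stmt14 (R : Type*) [CommRing R] [IsDomain R] [ValuationRing R]
    (B : Type*) [CommRing B] [IsDomain B] [IsLocalRing B] [IsIntegrallyClosed B]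
    [Algebra R B] (hinj : Function.Injective (algebraMap R B))
    (hloc : IsLocalHom (algebraMap R B)) [Algebra.IsAlgebraic R B] :
    ValuationRing B := by
  classical
  let L := FractionRing B
  haveI : IsScalarTower R B L := inferInstance
  have hBL : Function.Injective (algebraMap B L) := IsFractionRing.injective B L
  have hRL : Function.Injective (algebraMap R L) := by
    rw [IsScalarTower.algebraMap_eq R B L]
    exact hBL.comp hinj
  haveI : NoZeroSMulDivisors R L := by
    refine ⟨fun {c y} h => ?_⟩
    rw [Algebra.smul_def] at h
    rcases mul_eq_zero.mp h with h | h
    · exact Or.inl ((map_eq_zero_iff _ hRL).mp h)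
    · exact Or.inr h
  haveI : Algebra.IsAlgebraic R L := (IsFractionRing.isAlgebraic_iff' R B L).mp ‹_›
  -- key claim : every nonzero `x : L` has `x` or `x⁻¹` in the image of `B`.
  have key : ∀ x : L, x ≠ 0 →
      (∃ b : B, algebraMap B L b = x) ∨ (∃ b : B, algebraMap B L b = x⁻¹) := by
    intro x hx
    obtain ⟨p, hp0, hpx⟩ := (Algebra.IsAlgebraic.isAlgebraic (R := R) x)
    set φ : R →+* L := algebraMap R L with hφ
    set n := p.natDegree with hn
    have hsupp : p.support.Nonempty := Polynomial.support_nonempty.mpr hp0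
    obtain ⟨a, haj, hdvd⟩ := aux_min_dvd_stmt14 (fun a b =>
      (ValuationRing.iff_dvd_total.mp ‹ValuationRing R›).total a b)
      (p.support.image p.coeff) (hsupp.image _)
    obtain ⟨j, hj, rfl⟩ := Finset.mem_image.mp haj
    have hj0 : p.coeff j ≠ 0 := Polynomial.mem_support_iff.mp hj
    have hjn : j ≤ n := p.le_natDegree_of_ne_zero hj0
    have hdvd' : ∀ i : ℕ, p.coeff j ∣ p.coeff i := by
      intro i
      by_cases hi : i ∈ p.support
      · exact hdvd _ (Finset.mem_image_of_mem _ hi)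
      · rw [Polynomial.notMem_support_iff.mp hi]; exact dvd_zero _
    choose c hc using hdvd'
    have hcj : c j = 1 := by
      have h1 : p.coeff j * 1 = p.coeff j * c j := by rw [mul_one, ← hc j]
      exact (mul_left_cancel₀ hj0 h1).symm
    -- the algebraic relation, normalized so that the `j`-th coefficient is `1`
    have S0 : ∑ i ∈ Finset.range (n + 1), φ (p.coeff i) * x ^ i = 0 := by
      rw [← hpx, Polynomial.aeval_eq_sum_range]
      exact (Finset.sum_congr rfl fun i _ => (Algebra.smul_def _ _)).symm
    have S1 : ∑ i ∈ Finset.range (n + 1), φ (c i) * x ^ i = 0 := by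
      have h2 : φ (p.coeff j) * ∑ i ∈ Finset.range (n + 1), φ (c i) * x ^ i = 0 := by
        rw [Finset.mul_sum, ← S0]
        refine Finset.sum_congr rfl fun i _ => ?_
        rw [← mul_assoc, ← map_mul, ← hc i]
      rcases mul_eq_zero.mp h2 with h | h
      · exact absurd h ((map_ne_zero_iff φ hRL).mpr hj0)
      · exact h
    have hpow : ∀ a b : ℕ, a ≤ b → x ^ a * x⁻¹ ^ b = x⁻¹ ^ (b - a) := by
      intro a b h
      rw [pow_sub₀ x⁻¹ (inv_ne_zero hx) h, inv_pow x a, inv_inv, mul_comm]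
    have hpow' : ∀ a b : ℕ, b ≤ a → x ^ a * x⁻¹ ^ b = x ^ (a - b) := by
      intro a b h
      rw [pow_sub₀ x hx h, inv_pow]
    set pp : L := ∑ i ∈ Finset.Ioc j n, φ (c i) * x ^ (i - j) with hpp
    set negsum : L := ∑ i ∈ Finset.range j, φ (c i) * x⁻¹ ^ (j - i) with hnegsum
    -- dividing the relation by `x ^ j`
    have E : negsum + (1 + pp) = 0 := by
      have S2 : ∑ i ∈ Finset.range (n + 1), φ (c i) * x ^ i * x⁻¹ ^ j = 0 := by
        rw [← Finset.sum_mul, S1, zero_mul]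
      rw [← S2, Finset.range_eq_Ico,
        ← Finset.sum_Ico_consecutive _ (Nat.zero_le j) (by omega : j ≤ n + 1),
        Finset.sum_eq_sum_Ico_succ_bot (by omega : j < n + 1), Finset.Ico_add_one_add_one_eq_Ioc,
        ← Finset.range_eq_Ico]
      congr 1
      · refine Finset.sum_congr rfl fun i hi => ?_
        rw [Finset.mem_range] at hi
        rw [mul_assoc, hpow _ _ hi.le]
      · congr 1
        · rw [hcj, map_one, one_mul, hpow' j j le_rfl, Nat.sub_self, pow_zero]
        · refine Finset.sum_congr rfl fun i hi => ?_
          rw [Finset.mem_Ioc] at hi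
          rw [mul_assoc, hpow' _ _ hi.1.le]
    -- memberships
    have hφmem : ∀ (t : L) (i : ℕ), φ (c i) ∈ Algebra.adjoin B {t} := by
      intro t i
      rw [IsScalarTower.algebraMap_apply R B L]
      exact Subalgebra.algebraMap_mem _ _
    have hpp_x : pp ∈ Algebra.adjoin B {x} :=
      Subalgebra.sum_mem _ fun i _ => mul_mem (hφmem x i)
        (pow_mem (Algebra.self_mem_adjoin_singleton B x) _)
    have hns_xi : negsum ∈ Algebra.adjoin B {x⁻¹} :=
      Subalgebra.sum_mem _ fun i _ => mul_mem (hφmem x⁻¹ i)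
        (pow_mem (Algebra.self_mem_adjoin_singleton B x⁻¹) _)
    have hpp_xi : pp ∈ Algebra.adjoin B {x⁻¹} := by
      have : pp = -negsum - 1 := by linear_combination E
      rw [this]
      exact sub_mem (neg_mem hns_xi) (one_mem _)
    -- `pp` is integral over `B`, hence lies in `B`
    have hppint : IsIntegral B pp := aux_int_stmt14 x pp hx hpp_x hpp_xi
    obtain ⟨pb, hpb⟩ := IsIntegrallyClosed.isIntegral_iff.mp hppint
    have hunit : IsUnit (1 + pb) ∨ IsUnit pb := by
      have : IsUnit ((1 + pb) + (-pb)) := by simpa using isUnit_one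
      rcases IsLocalRing.isUnit_or_isUnit_of_isUnit_add this with h | h
      · exact Or.inl h
      · exact Or.inr (by simpa using h.neg)
    rcases hunit with hu | hu
    · -- `1 + pp` is a unit in `B`; then `x = ((1+pp)*x) / (1+pp) ∈ B`
      left
      have hw_xi : (1 + pp) * x ∈ Algebra.adjoin B {x⁻¹} := by
        have heq' : negsum * x = ∑ i ∈ Finset.range j, φ (c i) * x⁻¹ ^ (j - i - 1) := by
          rw [hnegsum, Finset.sum_mul]
          refine Finset.sum_congr rfl fun i hi => ?_
          rw [Finset.mem_range] at hi
          have hji : 1 ≤ j - i := by omega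
          rw [mul_assoc]
          congr 1
          conv_lhs => rw [← Nat.sub_add_cancel hji, pow_succ, mul_assoc,
            inv_mul_cancel₀ hx, mul_one]
        have h1 : (1 + pp) * x = -(negsum * x) := by
          have h2 : (1 + pp) = -negsum := by linear_combination E
          rw [h2, neg_mul]
        rw [h1, heq']
        exact neg_mem (Subalgebra.sum_mem _ fun i _ => mul_mem (hφmem x⁻¹ i)
          (pow_mem (Algebra.self_mem_adjoin_singleton B x⁻¹) _))
      have hw_x : (1 + pp) * x ∈ Algebra.adjoin B {x} :=
        mul_mem (add_mem (one_mem _) hpp_x) (Algebra.self_mem_adjoin_singleton B x)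
      obtain ⟨wb, hwb⟩ := IsIntegrallyClosed.isIntegral_iff.mp
        (aux_int_stmt14 x _ hx hw_x hw_xi)
      exact aux_div_stmt14 (wb := wb) hu (by rw [hwb, map_add, map_one, hpb])
    · -- `pp` is a unit in `B`; then `x⁻¹ = (pp * x⁻¹) / pp ∈ B`
      right
      have hw_x : pp * x⁻¹ ∈ Algebra.adjoin B {x} := by
        have heq : pp * x⁻¹ = ∑ i ∈ Finset.Ioc j n, φ (c i) * x ^ (i - j - 1) := by
          rw [hpp, Finset.sum_mul]
          refine Finset.sum_congr rfl fun i hi => ?_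
          rw [Finset.mem_Ioc] at hi
          have hji : 1 ≤ i - j := by omega
          rw [mul_assoc]
          congr 1
          conv_lhs => rw [← Nat.sub_add_cancel hji, pow_succ, mul_assoc,
            mul_inv_cancel₀ hx, mul_one]
        rw [heq]
        exact Subalgebra.sum_mem _ fun i _ => mul_mem (hφmem x i)
          (pow_mem (Algebra.self_mem_adjoin_singleton B x) _)
      have hw_xi : pp * x⁻¹ ∈ Algebra.adjoin B {x⁻¹} :=
        mul_mem hpp_xi (Algebra.self_mem_adjoin_singleton B x⁻¹)
      obtain ⟨wb, hwb⟩ := IsIntegrallyClosed.isIntegral_iff.mp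
        (aux_int_stmt14 x _ hx hw_x hw_xi)
      exact aux_div_stmt14 (wb := wb) hu (by rw [hwb, hpb])
  -- conclude: divisibility in `B` is total
  rw [ValuationRing.iff_dvd_total]
  constructor
  intro a b
  by_cases hb : b = 0
  · exact Or.inl (hb ▸ dvd_zero a)
  by_cases ha : a = 0
  · exact Or.inr (ha ▸ dvd_zero b)
  have hbL : algebraMap B L b ≠ 0 := fun h => hb (hBL (by simpa using h))
  have haL : algebraMap B L a ≠ 0 := fun h => ha (hBL (by simpa using h))
  have hxne : algebraMap B L a * (algebraMap B L b)⁻¹ ≠ 0 :=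
    mul_ne_zero haL (inv_ne_zero hbL)
  rcases key _ hxne with ⟨cc, hcc⟩ | ⟨cc, hcc⟩
  · refine Or.inr ⟨cc, hBL ?_⟩
    rw [map_mul, hcc]
    rw [mul_comm (algebraMap B L a), ← mul_assoc, mul_inv_cancel₀ hbL, one_mul]
  · refine Or.inl ⟨cc, hBL ?_⟩
    rw [map_mul, hcc, mul_inv, inv_inv]
    rw [← mul_assoc, mul_inv_cancel₀ haL, one_mul]
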